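/- For integer $M \ge 1$ and $y \ge 0$, the regularized lower incomplete gamma function satisfies $P(M, y) := 1 - \frac{\Gamma(M,y)}{(M-1)!} \ge \left(1 - e^{-(M!)^{-1/M} y}\right)^M$, with equality for $M = 1$. -/

import Mathlib

open Real

open Set Filter MeasureTheory


private lemma aux_sq {x : ℝ} (hx : 0 < x) : x^2 * exp (-x) < (1 - exp (-x))^2 := by
  have h1 : 1 - exp (-x) = exp (-(x/2)) * (2 * sinh (x/2)) := by
    rw [Real.sinh_eq]
    rw [show (-x) = (-(x/2)) + (-(x/2)) by ring, Real.exp_add]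
    have e1 : exp (-(x/2)) * exp (x/2) = 1 := by
      rw [← Real.exp_add]; simp
    nlinarith [Real.exp_pos (-(x/2))]
  have h2 : x < 2 * sinh (x/2) := by
    have := (Real.self_lt_sinh_iff (x := x/2)).2 (by linarith)
    linarith
  have h3 : x * exp (-(x/2)) < 1 - exp (-x) := by
    rw [h1]
    have := Real.exp_pos (-(x/2))
    nlinarith
  have h4 : (x * exp (-(x/2)))^2 < (1 - exp (-x))^2 := by
    apply pow_lt_pow_left₀ h3 (by positivity)
    norm_num
  calc x^2 * exp (-x) = (x * exp (-(x/2)))^2 := by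
        rw [mul_pow, ← Real.exp_nat_mul]
        norm_num
        left; ring
      _ < (1 - exp (-x))^2 := h4

private noncomputable def phiF (n : ℕ) (d : ℝ) (t : ℝ) : ℝ :=
  n * (Real.log (d*t) - Real.log (1 - Real.exp (-(d*t)))) - (1-d)*t

private noncomputable def phiF1 (n : ℕ) (d : ℝ) (t : ℝ) : ℝ :=
  n * (t⁻¹ - d * Real.exp (-(d*t)) / (1 - Real.exp (-(d*t)))) - (1-d)

private noncomputable def phiF2 (n : ℕ) (d : ℝ) (t : ℝ) : ℝ :=
  n * (-(t^2)⁻¹ + d^2 * Real.exp (-(d*t)) / (1 - Real.exp (-(d*t)))^2)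

private lemma den_pos {d t : ℝ} (hd : 0 < d) (ht : 0 < t) : 0 < 1 - Real.exp (-(d*t)) := by
  have : Real.exp (-(d*t)) < 1 := by
    rw [Real.exp_lt_one_iff]
    nlinarith
  linarith

private lemma hasDerivAt_inner (d t : ℝ) :
    HasDerivAt (fun t => 1 - Real.exp (-(d*t))) (d * Real.exp (-(d*t))) t := by
  have h1 : HasDerivAt (fun t : ℝ => -(d*t)) (-d) t := by
    exact ((hasDerivAt_id t).const_mul d).neg.congr_deriv (by ring)
  have h2 := (Real.hasDerivAt_exp (-(d*t))).comp t h1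
  simpa [mul_comm] using (h2.const_sub 1)

private lemma hasDerivAt_phiF {n : ℕ} {d t : ℝ} (hd : 0 < d) (ht : 0 < t) :
    HasDerivAt (phiF n d) (phiF1 n d t) t := by
  have hdt : 0 < d * t := mul_pos hd ht
  have hden := den_pos hd ht
  have log1 : HasDerivAt (fun t => Real.log (d*t)) t⁻¹ t := by
    have hlin : HasDerivAt (fun t : ℝ => d*t) d t := by
      simpa using (hasDerivAt_id t).const_mul d
    have := (Real.hasDerivAt_log hdt.ne').comp t hlin
    refine this.congr_deriv (Eq.symm ?_)
    field_simp
  have log2 : HasDerivAt (fun t => Real.log (1 - Real.exp (-(d*t))))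
      (d * Real.exp (-(d*t)) / (1 - Real.exp (-(d*t)))) t := by
    have := (Real.hasDerivAt_log hden.ne').comp t (hasDerivAt_inner d t)
    refine this.congr_deriv (Eq.symm ?_)
    field_simp
  have hlin2 : HasDerivAt (fun t : ℝ => (1-d)*t) (1-d) t := by
    simpa using (hasDerivAt_id t).const_mul (1-d)
  exact ((log1.sub log2).const_mul (n:ℝ)).sub hlin2

private lemma hasDerivAt_phiF1 {n : ℕ} {d t : ℝ} (hd : 0 < d) (ht : 0 < t) :
    HasDerivAt (phiF1 n d) (phiF2 n d t) t := by
  have hden := den_pos hd ht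
  have hinv : HasDerivAt (fun t : ℝ => t⁻¹) (-(t^2)⁻¹) t := hasDerivAt_inv ht.ne'
  have hu : HasDerivAt (fun t => d * Real.exp (-(d*t))) (d * (d * Real.exp (-(d*t)) * (-1))) t := by
    have h1 : HasDerivAt (fun t : ℝ => -(d*t)) (-d) t := by
      exact ((hasDerivAt_id t).const_mul d).neg.congr_deriv (by ring)
    have h2 := (Real.hasDerivAt_exp (-(d*t))).comp t h1
    refine (h2.const_mul d).congr_deriv (Eq.symm ?_)
    ring
  have hfrac := hu.div (hasDerivAt_inner d t) hden.ne'
  have := ((hinv.sub hfrac).const_mul (n:ℝ)).sub_const (1-d)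
  refine this.congr_deriv (Eq.symm ?_)
  simp only [phiF2]
  have h2 : ((1 - Real.exp (-(d*t)))^2) ≠ 0 := by positivity
  have ht2 : (t^2) ≠ 0 := by positivity
  field_simp
  ring_nf

private lemma phiF2_neg {n : ℕ} {d t : ℝ} (hn : 1 ≤ n) (hd : 0 < d) (ht : 0 < t) :
    phiF2 n d t < 0 := by
  have hden := den_pos hd ht
  have key := aux_sq (mul_pos hd ht)
  have h1 : d^2 * Real.exp (-(d*t)) / (1 - Real.exp (-(d*t)))^2 < (t^2)⁻¹ := by
    rw [div_lt_iff₀ (by positivity), inv_mul_eq_div, lt_div_iff₀ (by positivity)]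
    calc d^2 * Real.exp (-(d*t)) * t^2 = (d*t)^2 * Real.exp (-(d*t)) := by ring
      _ < (1 - Real.exp (-(d*t)))^2 := key
  have h2 : -(t^2)⁻¹ + d^2 * Real.exp (-(d*t)) / (1 - Real.exp (-(d*t)))^2 < 0 := by linarith
  have hn' : (0:ℝ) < n := by exact_mod_cast hn
  simp only [phiF2]
  exact mul_neg_of_pos_of_neg hn' h2

private lemma phiF_concave {n : ℕ} {d : ℝ} (hn : 1 ≤ n) (hd : 0 < d) :
    StrictConcaveOn ℝ (Set.Ioi 0) (phiF n d) := by
  apply strictConcaveOn_of_deriv2_neg (convex_Ioi 0)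
  · intro t ht
    exact (hasDerivAt_phiF hd ht).continuousAt.continuousWithinAt
  · intro t ht
    rw [interior_Ioi] at ht
    have heq : deriv (phiF n d) =ᶠ[nhds t] phiF1 n d := by
      filter_upwards [isOpen_Ioi.mem_nhds ht] with x hx
      exact (hasDerivAt_phiF hd hx).deriv
    have : deriv^[2] (phiF n d) t = deriv (phiF1 n d) t := by
      simp only [Function.iterate_succ, Function.iterate_zero, Function.comp]
      exact heq.deriv_eq
    rw [this, (hasDerivAt_phiF1 hd ht).deriv]
    exact phiF2_neg hn hd ht

private lemma tendsto_one_sub_exp_neg_div :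
    Filter.Tendsto (fun x : ℝ => (1 - Real.exp (-x)) / x) (nhdsWithin 0 (Set.Ioi 0)) (nhds 1) := by
  have hd : HasDerivAt (fun x : ℝ => 1 - Real.exp (-x)) 1 0 := by
    have := hasDerivAt_inner 1 0
    simpa using this
  have h := hasDerivAt_iff_tendsto_slope.1 hd
  have h2 : Filter.Tendsto (slope (fun x : ℝ => 1 - Real.exp (-x)) 0)
      (nhdsWithin 0 (Set.Ioi 0)) (nhds 1) :=
    h.mono_left (nhdsWithin_mono 0 (fun x hx => ne_of_gt hx))
  apply h2.congr'
  filter_upwards [self_mem_nhdsWithin] with x hx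
  simp [slope, div_eq_inv_mul]

private lemma phiF_tendsto {n : ℕ} {d : ℝ} (hd : 0 < d) :
    Filter.Tendsto (phiF n d) (nhdsWithin 0 (Set.Ioi 0)) (nhds 0) := by
  have hmap : Filter.Tendsto (fun t : ℝ => d * t) (nhdsWithin 0 (Set.Ioi 0))
      (nhdsWithin 0 (Set.Ioi 0)) := by
    apply Filter.Tendsto.inf
    · have : Filter.Tendsto (fun t : ℝ => d * t) (nhds 0) (nhds (d * 0)) :=
        (continuous_const.mul continuous_id).tendsto 0
      simpa using this
    · rw [Filter.tendsto_principal]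
      exact Filter.eventually_principal.2 (fun t ht => Set.mem_Ioi.2 (mul_pos hd ht))
  have hlog : Filter.Tendsto (fun x : ℝ => Real.log ((1 - Real.exp (-x)) / x))
      (nhdsWithin 0 (Set.Ioi 0)) (nhds 0) := by
    have := (Real.continuousAt_log one_ne_zero).tendsto
    rw [Real.log_one] at this
    exact this.comp tendsto_one_sub_exp_neg_div
  have hmain : Filter.Tendsto (fun t : ℝ => (n:ℝ) *
      (-Real.log ((1 - Real.exp (-(d*t))) / (d*t))) - (1-d)*t)
      (nhdsWithin 0 (Set.Ioi 0)) (nhds 0) := by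
    have h1 := ((hlog.comp hmap).neg.const_mul (n:ℝ))
    have h2 : Filter.Tendsto (fun t : ℝ => (1-d)*t) (nhdsWithin 0 (Set.Ioi 0)) (nhds 0) := by
      have : Filter.Tendsto (fun t : ℝ => (1-d)*t) (nhds 0) (nhds ((1-d) * 0)) :=
        (continuous_const.mul continuous_id).tendsto 0
      simpa using this.mono_left nhdsWithin_le_nhds
    simpa using h1.sub h2
  apply hmain.congr'
  filter_upwards [self_mem_nhdsWithin] with t ht
  have hdt : 0 < d * t := mul_pos hd ht
  have hden := den_pos hd ht
  simp only [phiF]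
  rw [Real.log_div hden.ne' hdt.ne']
  ring

private lemma concave_chord {f : ℝ → ℝ} (hf : ConcaveOn ℝ (Set.Ioi 0) f)
    (h0 : Filter.Tendsto f (nhdsWithin 0 (Set.Ioi 0)) (nhds 0))
    {a b : ℝ} (ha : 0 < a) (hab : a < b) (hb : 0 < f b) : 0 < f a := by
  have hb0 : 0 < b := lt_trans ha hab
  set L : ℝ → ℝ := fun ε => ((b-a)/(b-ε)) * f ε + ((a-ε)/(b-ε)) * f b with hL
  have hT : Filter.Tendsto L (nhdsWithin 0 (Set.Ioi 0)) (nhds ((b-a)/b * 0 + a/b * f b)) := by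
    have hid : Filter.Tendsto (fun ε : ℝ => ε) (nhdsWithin 0 (Set.Ioi 0)) (nhds 0) :=
      tendsto_id.mono_left nhdsWithin_le_nhds
    have h1 : Filter.Tendsto (fun ε : ℝ => (b-a)/(b-ε)) (nhdsWithin 0 (Set.Ioi 0))
        (nhds ((b-a)/b)) := by
      have := Filter.Tendsto.div (tendsto_const_nhds (x := b - a))
        ((tendsto_const_nhds (x := b)).sub hid) (by simpa using hb0.ne')
      simp only [sub_zero] at this
      exact this
    have h2 : Filter.Tendsto (fun ε : ℝ => (a-ε)/(b-ε)) (nhdsWithin 0 (Set.Ioi 0))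
        (nhds (a/b)) := by
      have := Filter.Tendsto.div ((tendsto_const_nhds (x := a)).sub hid)
        ((tendsto_const_nhds (x := b)).sub hid) (by simpa using hb0.ne')
      simp only [sub_zero] at this
      exact this
    exact (h1.mul h0).add (h2.mul tendsto_const_nhds)
  have hle : ∀ᶠ ε in nhdsWithin 0 (Set.Ioi 0), L ε ≤ f a := by
    have hmem : Set.Ioo (0:ℝ) a ∈ nhdsWithin 0 (Set.Ioi 0) :=
      Ioo_mem_nhdsGT_of_mem ⟨le_refl 0, ha⟩
    filter_upwards [hmem] with ε hε
    have hεa : ε < a := hε.2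
    have hε0 : 0 < ε := hε.1
    have hne : b - ε ≠ 0 := by linarith [hab, hεa]
    have hμ : 0 ≤ (b-a)/(b-ε) := by
      apply div_nonneg <;> linarith
    have hν : 0 ≤ (a-ε)/(b-ε) := by
      apply div_nonneg <;> linarith
    have hsum : (b-a)/(b-ε) + (a-ε)/(b-ε) = 1 := by
      field_simp
      ring
    have hcomb := hf.2 (Set.mem_Ioi.2 hε0) (Set.mem_Ioi.2 hb0) hμ hν hsum
    have hpt : (b-a)/(b-ε) * ε + (a-ε)/(b-ε) * b = a := by
      rw [div_mul_eq_mul_div, div_mul_eq_mul_div, ← add_div, div_eq_iff hne]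
      ring
    simp only [smul_eq_mul] at hcomb
    rw [hpt] at hcomb
    simpa [L] using hcomb
  have hlim : (b-a)/b * 0 + a/b * f b ≤ f a := le_of_tendsto hT hle
  have : 0 < a/b * f b := mul_pos (div_pos ha hb0) hb
  linarith

private lemma hasDerivAt_gfun {n : ℕ} (d : ℝ) (t : ℝ) :
    HasDerivAt (fun t => (1 - Real.exp (-(d*t)))^(n+1))
      ((n+1 : ℝ) * d * (Real.exp (-(d*t)) * (1 - Real.exp (-(d*t)))^n)) t := by
  have h1 : HasDerivAt (fun t : ℝ => -(d*t)) (-d) t := by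
    exact ((hasDerivAt_id t).const_mul d).neg.congr_deriv (by ring)
  have h2 := (Real.hasDerivAt_exp (-(d*t))).comp t h1
  have h3 : HasDerivAt (fun t => 1 - Real.exp (-(d*t))) (d * Real.exp (-(d*t))) t := by
    simpa [mul_comm] using h2.const_sub 1
  have h4 := h3.pow (n+1)
  refine h4.congr_deriv (Eq.symm ?_)
  simp
  ring

/-- the key pointwise identity -/
private lemma key_identity {n : ℕ} {d t : ℝ} (hd0 : 0 < d)
    (hfac : (((n+1).factorial : ℝ)) * d ^ (n+1) = 1) (ht : 0 < t) :
    t ^ n * Real.exp (-t) =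
      (n.factorial : ℝ) * ((n+1 : ℝ) * d * (Real.exp (-(d*t)) * (1 - Real.exp (-(d*t)))^n)) *
        Real.exp (phiF n d t) := by
  have hdt : 0 < d * t := mul_pos hd0 ht
  have hden := den_pos hd0 ht
  have hexp : Real.exp (phiF n d t) =
      ((d*t)/(1 - Real.exp (-(d*t))))^n * Real.exp (-((1-d)*t)) := by
    rw [← Real.exp_log (x := (d*t)/(1 - Real.exp (-(d*t)))) (div_pos hdt hden)]
    rw [← Real.exp_nat_mul, ← Real.exp_add]
    congr 1
    rw [Real.log_div hdt.ne' hden.ne']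
    simp only [phiF]
    ring
  rw [hexp]
  symm
  have hcancel : ((d*t)/(1 - Real.exp (-(d*t))))^n * (1 - Real.exp (-(d*t)))^n = (d*t)^n := by
    rw [div_pow, div_mul_cancel₀]
    positivity
  have hee : Real.exp (-(d*t)) * Real.exp (-((1-d)*t)) = Real.exp (-t) := by
    rw [← Real.exp_add]; congr 1; ring
  have hfac2 : (n.factorial : ℝ) * (n+1 : ℝ) = ((n+1).factorial : ℝ) := by
    rw [Nat.factorial_succ]
    push_cast
    ring
  have hdpow : d * (d*t)^n = d^(n+1) * t^n := by
    rw [mul_pow]; ring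
  calc (n.factorial : ℝ) * ((n+1 : ℝ) * d * (Real.exp (-(d*t)) * (1 - Real.exp (-(d*t)))^n)) *
        (((d*t)/(1 - Real.exp (-(d*t))))^n * Real.exp (-((1-d)*t)))
      = ((n.factorial : ℝ) * (n+1 : ℝ)) * (d * ((((d*t)/(1 - Real.exp (-(d*t))))^n *
          (1 - Real.exp (-(d*t)))^n))) * (Real.exp (-(d*t)) * Real.exp (-((1-d)*t))) := by ring
    _ = ((n+1).factorial : ℝ) * (d^(n+1) * t^n) * Real.exp (-t) := by
        rw [hfac2, hcancel, hee, hdpow]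
    _ = t ^ n * Real.exp (-t) := by
        rw [show ((n+1).factorial : ℝ) * (d^(n+1) * t^n) = (((n+1).factorial : ℝ) * d^(n+1)) * t^n by ring,
          hfac]
        ring

private lemma q_integrableOn_Ioi_zero (n : ℕ) :
    IntegrableOn (fun t : ℝ => t ^ n * Real.exp (-t)) (Set.Ioi 0) := by
  have h := Real.GammaIntegral_convergent (s := (n+1 : ℝ)) (by positivity)
  apply h.congr_fun ?_ measurableSet_Ioi
  intro x hx
  show Real.exp (-x) * x ^ ((n:ℝ) + 1 - 1) = x ^ n * Real.exp (-x)
  rw [show ((n:ℝ) + 1 - 1) = (n:ℝ) by ring, Real.rpow_natCast]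
  ring

private lemma q_integral_Ioi_zero (n : ℕ) :
    ∫ t in Set.Ioi (0:ℝ), t ^ n * Real.exp (-t) = (n.factorial : ℝ) := by
  have h := Real.Gamma_eq_integral (s := (n+1 : ℝ)) (by positivity)
  have h2 : Real.Gamma ((n:ℝ)+1) = (n.factorial : ℝ) := Real.Gamma_nat_eq_factorial n
  rw [h2] at h
  rw [h]
  apply MeasureTheory.setIntegral_congr_fun measurableSet_Ioi
  intro x hx
  show x ^ n * Real.exp (-x) = Real.exp (-x) * x ^ ((n:ℝ) + 1 - 1)
  rw [show ((n:ℝ) + 1 - 1) = (n:ℝ) by ring, Real.rpow_natCast]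
  ring

private lemma core {n : ℕ} (hn : 1 ≤ n) {d : ℝ} (hd0 : 0 < d) (hd1 : d < 1)
    (hfac : (((n+1).factorial : ℝ)) * d ^ (n+1) = 1) {y : ℝ} (hy : 0 ≤ y) :
    (1 - Real.exp (-(d * y))) ^ (n+1) * (n.factorial : ℝ) ≤
      (n.factorial : ℝ) - ∫ t in Set.Ioi y, t ^ n * Real.exp (-t) := by
  set q : ℝ → ℝ := fun t => t ^ n * Real.exp (-t) with hq
  set Gder : ℝ → ℝ := fun t => (n+1 : ℝ) * d * (Real.exp (-(d*t)) * (1 - Real.exp (-(d*t)))^n)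
    with hGder
  set gfun : ℝ → ℝ := fun t => (1 - Real.exp (-(d*t)))^(n+1) with hgfun
  have hc : (0:ℝ) < (n.factorial : ℝ) := by exact_mod_cast n.factorial_pos
  have hGcont : Continuous Gder := by
    apply Continuous.mul continuous_const
    apply Continuous.mul
    · exact Real.continuous_exp.comp (continuous_const.mul continuous_id).neg
    · exact (continuous_const.sub (Real.continuous_exp.comp
        (continuous_const.mul continuous_id).neg)).pow n
  have hgderiv : ∀ t : ℝ, HasDerivAt gfun (Gder t) t := fun t => hasDerivAt_gfun d t
  have hGnonneg : ∀ t : ℝ, 0 ≤ t → 0 ≤ Gder t := by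
    intro t ht
    have : Real.exp (-(d*t)) ≤ 1 := by
      rw [Real.exp_le_one_iff]
      nlinarith
    have h2 : (0:ℝ) ≤ 1 - Real.exp (-(d*t)) := by linarith
    positivity
  have htend : Filter.Tendsto gfun Filter.atTop (nhds 1) := by
    have h1 : Filter.Tendsto (fun t : ℝ => d * t) Filter.atTop Filter.atTop :=
      Filter.Tendsto.const_mul_atTop hd0 Filter.tendsto_id
    have h2 : Filter.Tendsto (fun t : ℝ => Real.exp (-(d * t))) Filter.atTop (nhds 0) :=
      Real.tendsto_exp_neg_atTop_nhds_zero.comp h1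
    have h3 := ((tendsto_const_nhds (x := (1:ℝ))).sub h2).pow (n+1)
    simpa using h3
  -- integral of Gder over Ioi y
  have hIoiG : ∫ t in Set.Ioi y, Gder t = 1 - gfun y := by
    have := integral_Ioi_of_hasDerivAt_of_nonneg' (g := gfun) (g' := Gder) (a := y) (l := 1)
      (fun t _ => hgderiv t) (fun t ht => hGnonneg t (le_of_lt (lt_of_le_of_lt hy ht))) htend
    simpa using this
  have hG_int : IntegrableOn Gder (Set.Ioi y) :=
    integrableOn_Ioi_deriv_of_nonneg' (fun t _ => hgderiv t)
      (fun t ht => hGnonneg t (le_of_lt (lt_of_le_of_lt hy ht))) htend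
  -- integral of Gder over Ioc 0 y
  have hIocG : ∫ t in Set.Ioc 0 y, Gder t = gfun y := by
    rw [← intervalIntegral.integral_of_le hy]
    rw [intervalIntegral.integral_eq_sub_of_hasDerivAt (fun t _ => hgderiv t)
      (hGcont.intervalIntegrable 0 y)]
    simp [hgfun]
  -- splitting of q integral
  have hq_int := q_integrableOn_Ioi_zero n
  have hq_int_Ioc : IntegrableOn q (Set.Ioc 0 y) := hq_int.mono_set Set.Ioc_subset_Ioi_self
  have hq_int_Ioi : IntegrableOn q (Set.Ioi y) := by
    apply hq_int.mono_set
    intro t ht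
    exact lt_of_le_of_lt hy ht
  have hsplit : (∫ t in Set.Ioc 0 y, q t) + (∫ t in Set.Ioi y, q t) = (n.factorial : ℝ) := by
    rw [← q_integral_Ioi_zero n, ← Set.Ioc_union_Ioi_eq_Ioi hy]
    exact (MeasureTheory.setIntegral_union (Set.Ioc_disjoint_Ioi le_rfl) measurableSet_Ioi
      hq_int_Ioc hq_int_Ioi).symm
  -- the dichotomy
  by_cases hcase : ∀ t ∈ Set.Ioc (0:ℝ) y, 0 ≤ phiF n d t
  · -- case A : on (0, y], density of gamma dominates
    have hpt : ∀ t ∈ Set.Ioc (0:ℝ) y, (n.factorial : ℝ) * Gder t ≤ q t := by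
      intro t ht
      have h1 : q t = (n.factorial : ℝ) * Gder t * Real.exp (phiF n d t) :=
        key_identity hd0 hfac ht.1
      have h2 : 1 ≤ Real.exp (phiF n d t) := Real.one_le_exp (hcase t ht)
      have h3 : 0 ≤ (n.factorial : ℝ) * Gder t :=
        mul_nonneg hc.le (hGnonneg t ht.1.le)
      calc (n.factorial : ℝ) * Gder t = (n.factorial : ℝ) * Gder t * 1 := by ring
        _ ≤ (n.factorial : ℝ) * Gder t * Real.exp (phiF n d t) := by
            apply mul_le_mul_of_nonneg_left h2 h3
        _ = q t := h1.symm
    have hmono : ∫ t in Set.Ioc 0 y, (n.factorial : ℝ) * Gder t ≤ ∫ t in Set.Ioc 0 y, q t :=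
      MeasureTheory.setIntegral_mono_on
        ((continuous_const.mul hGcont).integrableOn_Ioc)
        hq_int_Ioc measurableSet_Ioc hpt
    rw [MeasureTheory.integral_const_mul, hIocG] at hmono
    have : (∫ t in Set.Ioi y, q t) ≤ (n.factorial : ℝ) - (n.factorial : ℝ) * gfun y := by
      linarith
    simp only [hgfun] at this
    linarith [this]
  · -- case B : on [y, ∞), gder dominates
    push_neg at hcase
    obtain ⟨t1, ht1mem, ht1neg⟩ := hcase
    have hBpt : ∀ t ∈ Set.Ioi y, q t ≤ (n.factorial : ℝ) * Gder t := by
      intro t ht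
      have htpos : 0 < t := lt_of_le_of_lt hy ht
      have hphile : phiF n d t ≤ 0 := by
        by_contra hpos
        push_neg at hpos
        have ht1t : t1 < t := lt_of_le_of_lt ht1mem.2 ht
        have := concave_chord (phiF_concave hn hd0).concaveOn (phiF_tendsto hd0)
          ht1mem.1 ht1t hpos
        linarith
      have h1 : q t = (n.factorial : ℝ) * Gder t * Real.exp (phiF n d t) :=
        key_identity hd0 hfac htpos
      have h2 : Real.exp (phiF n d t) ≤ 1 := Real.exp_le_one_iff.2 hphile
      have h3 : 0 ≤ (n.factorial : ℝ) * Gder t :=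
        mul_nonneg hc.le (hGnonneg t htpos.le)
      calc q t = (n.factorial : ℝ) * Gder t * Real.exp (phiF n d t) := h1
        _ ≤ (n.factorial : ℝ) * Gder t * 1 := mul_le_mul_of_nonneg_left h2 h3
        _ = (n.factorial : ℝ) * Gder t := by ring
    have hmono : ∫ t in Set.Ioi y, q t ≤ ∫ t in Set.Ioi y, (n.factorial : ℝ) * Gder t :=
      MeasureTheory.setIntegral_mono_on hq_int_Ioi (hG_int.const_mul _)
        measurableSet_Ioi hBpt
    rw [MeasureTheory.integral_const_mul, hIoiG] at hmono
    simp only [hgfun] at hmono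
    nlinarith [hmono]

/-- Upper incomplete gamma function of integer order `M ≥ 1`. -/
noncomputable def upperGamma (M : ℕ) (y : ℝ) : ℝ :=
  ∫ t in Set.Ioi y, t ^ (M - 1) * Real.exp (-t)

/-- DLMF 8.10.11 for integer order: the regularized lower incomplete gamma function
satisfies `P(M, y) = 1 - Γ(M,y)/(M-1)! ≥ (1 - e^{-(M!)^{-1/M} y})^M`, with equality
for `M = 1`. -/
theorem regularized_gamma_lower_bound (M : ℕ) (hM : 1 ≤ M) (y : ℝ) (hy : 0 ≤ y) :
    (1 - Real.exp (-((Nat.factorial M : ℝ) ^ (-(1:ℝ)/M) * y))) ^ M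
      ≤ 1 - upperGamma M y / (Nat.factorial (M - 1) : ℝ) ∧
    (M = 1 →
      (1 - Real.exp (-((Nat.factorial M : ℝ) ^ (-(1:ℝ)/M) * y))) ^ M
        = 1 - upperGamma M y / (Nat.factorial (M - 1) : ℝ)) := by
  rcases eq_or_lt_of_le hM with hM1 | hM2
  · -- M = 1
    obtain rfl : M = 1 := hM1.symm
    have hUG : upperGamma 1 y = Real.exp (-y) := by
      simp only [upperGamma]
      rw [show (1 - 1 : ℕ) = 0 by rfl]
      simp only [pow_zero, one_mul]
      exact integral_exp_neg_Ioi y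
    have heq : (1 - Real.exp (-((Nat.factorial 1 : ℝ) ^ (-(1:ℝ)/(1:ℕ)) * y))) ^ 1
        = 1 - upperGamma 1 y / (Nat.factorial (1 - 1) : ℝ) := by
      rw [hUG]
      norm_num
    exact ⟨le_of_eq heq, fun _ => heq⟩
  · -- M ≥ 2
    obtain ⟨n, rfl⟩ : ∃ n, M = n + 1 := ⟨M - 1, (Nat.succ_pred_eq_of_pos (by omega)).symm⟩
    have hn : 1 ≤ n := by omega
    have hF0 : (0:ℝ) < ((n+1).factorial : ℝ) := by exact_mod_cast (n+1).factorial_pos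
    have hF1 : (1:ℝ) < ((n+1).factorial : ℝ) := by
      exact_mod_cast Nat.one_lt_factorial.2 (by omega)
    set d : ℝ := (Nat.factorial (n+1) : ℝ) ^ (-(1:ℝ)/((n+1 : ℕ) : ℝ)) with hd_def
    have hd0 : 0 < d := Real.rpow_pos_of_pos hF0 _
    have hd1 : d < 1 := by
      apply Real.rpow_lt_one_of_one_lt_of_neg hF1
      apply div_neg_of_neg_of_pos (by norm_num)
      positivity
    have hfac : ((n+1).factorial : ℝ) * d ^ (n+1) = 1 := by
      have h1 : d ^ (n+1) = ((n+1).factorial : ℝ) ^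
          ((-(1:ℝ)/((n+1 : ℕ) : ℝ)) * ((n+1 : ℕ) : ℝ)) := by
        rw [Real.rpow_mul hF0.le, ← Real.rpow_natCast
          (((n+1).factorial : ℝ) ^ (-(1:ℝ)/((n+1 : ℕ) : ℝ))) (n+1)]
      have h2 : (-(1:ℝ)/((n+1 : ℕ) : ℝ)) * ((n+1 : ℕ) : ℝ) = -1 := by
        have : ((n+1 : ℕ) : ℝ) ≠ 0 := by positivity
        field_simp
      rw [h1, h2, Real.rpow_neg_one]
      exact mul_inv_cancel₀ hF0.ne'
    have hcore := core hn hd0 hd1 hfac hy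
    have hUG : upperGamma (n+1) y = ∫ t in Set.Ioi y, t ^ n * Real.exp (-t) := by
      simp [upperGamma]
    have hc : (0:ℝ) < (n.factorial : ℝ) := by exact_mod_cast n.factorial_pos
    have hmain : (1 - Real.exp (-(d * y))) ^ (n+1)
        ≤ 1 - upperGamma (n+1) y / (Nat.factorial (n+1-1) : ℝ) := by
      rw [hUG, show n+1-1 = n by omega]
      set I := ∫ t in Set.Ioi y, t ^ n * Real.exp (-t) with hI
      have h3 : (1 - Real.exp (-(d * y))) ^ (n+1) ≤ ((n.factorial : ℝ) - I) / (n.factorial : ℝ) := by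
        rw [le_div_iff₀ hc]
        linarith
      have h4 : ((n.factorial : ℝ) - I) / (n.factorial : ℝ) = 1 - I / (n.factorial : ℝ) := by
        rw [sub_div, div_self hc.ne']
      linarith
    constructor
    · exact hmain
    · intro h
      omega
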